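/- Let X be an n×p real matrix with columns x_1,…,x_p, let β ∈ ℝ^p, ε ∈ ℝ^n and y = Xβ + ε. Fix j ∈ {1,…,p} and a vector z_j ∈ ℝ^n with z_j^T x_j ≠ 0, and given any vector β̂^{(init)} ∈ ℝ^p define the low-dimensional projection estimator β̂_j = z_j^T y/(z_j^T x_j) − Σ_{k≠j} (z_j^T x_k) β̂_k^{(init)}/(z_j^T x_j). Then |β̂_j − β_j − z_j^T ε/(z_j^T x_j)| ≤ (max_{k≠j} |z_j^T x_k| / |z_j^T x_j|) · ‖β̂^{(init)} − β‖₁. -/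

import Mathlib

/-- deterministic error decomposition bound for the LDPE. -/
theorem ldpe_bias_bound (n p : ℕ) (X : Matrix (Fin n) (Fin p) ℝ)
    (β βinit : Fin p → ℝ) (ε : Fin n → ℝ) (j : Fin p)
    (z : Fin n → ℝ)
    (y : Fin n → ℝ) (hy : y = fun i => (∑ k, X i k * β k) + ε i)
    (hzx : (∑ i, z i * X i j) ≠ 0)
    (hne : (Finset.univ.erase j).Nonempty)
    (βhatj : ℝ)
    (hβhatj : βhatj = (∑ i, z i * y i) / (∑ i, z i * X i j)
      - (∑ k ∈ Finset.univ.erase j, (∑ i, z i * X i k) * βinit k) / (∑ i, z i * X i j)) :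
    |βhatj - β j - (∑ i, z i * ε i) / (∑ i, z i * X i j)| ≤
      ((Finset.univ.erase j).sup' hne (fun k => |∑ i, z i * X i k|)) / |∑ i, z i * X i j|
        * ∑ k, |βinit k - β k| := by
  set c := ∑ i, z i * X i j with hc
  set a := fun k => ∑ i, z i * X i k with ha
  set e := ∑ i, z i * ε i with he
  have hzy : (∑ i, z i * y i) = (∑ k, a k * β k) + e := by
    subst hy
    simp only [mul_add, Finset.sum_add_distrib, he, ha]
    congr 1
    simp_rw [Finset.mul_sum]
    rw [Finset.sum_comm]
    refine Finset.sum_congr rfl fun k _ => ?_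
    rw [Finset.sum_mul]
    exact Finset.sum_congr rfl fun i _ => by ring
  have hsplit : (∑ k, a k * β k) = a j * β j + ∑ k ∈ Finset.univ.erase j, a k * β k := by
    exact (Finset.add_sum_erase _ _ (Finset.mem_univ j)).symm
  have key : βhatj - β j - e / c = (∑ k ∈ Finset.univ.erase j, a k * (β k - βinit k)) / c := by
    rw [hβhatj, hzy, hsplit]
    field_simp
    simp only [mul_sub, Finset.sum_sub_distrib]
    have hcj : a j = c := rfl
    rw [hcj]
    ring
  rw [key, abs_div, div_mul_eq_mul_div]
  have hcpos : (0:ℝ) < |c| := abs_pos.mpr hzx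
  apply div_le_div_of_nonneg_right ?_ hcpos.le |>.trans_eq rfl
  calc |∑ k ∈ Finset.univ.erase j, a k * (β k - βinit k)|
      ≤ ∑ k ∈ Finset.univ.erase j, |a k * (β k - βinit k)| := Finset.abs_sum_le_sum_abs _ _
    _ ≤ ∑ k ∈ Finset.univ.erase j,
        ((Finset.univ.erase j).sup' hne (fun k => |a k|)) * |βinit k - β k| := by
        apply Finset.sum_le_sum
        intro k hk
        rw [abs_mul, abs_sub_comm]
        exact mul_le_mul_of_nonneg_right (Finset.le_sup' (fun k => |a k|) hk) (abs_nonneg _)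
    _ = ((Finset.univ.erase j).sup' hne (fun k => |a k|)) *
        ∑ k ∈ Finset.univ.erase j, |βinit k - β k| := (Finset.mul_sum _ _ _).symm
    _ ≤ ((Finset.univ.erase j).sup' hne (fun k => |a k|)) * ∑ k, |βinit k - β k| := by
        apply mul_le_mul_of_nonneg_left
        · exact Finset.sum_le_sum_of_subset_of_nonneg (Finset.erase_subset _ _)
            (fun _ _ _ => abs_nonneg _)
        · obtain ⟨k, hk⟩ := hne
          exact le_trans (abs_nonneg (a k)) (Finset.le_sup' (fun k => |a k|) hk)
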